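/- Let τ = P_{c,c'∼ρ²}[c = c'] be the probability that two i.i.d. classes from ρ coincide, and assume τ < 1. If ℓ is convex with ℓ(0) = 1 and the mean-classifier average binary supervised loss is L_sup^μ(f) = E_{c⁺,c⁻∼ρ²}[ (1/2) E_{x∼D_{c⁺}} ℓ(f(x)ᵀ(μ_{c⁺} − μ_{c⁻})) + (1/2) E_{x∼D_{c⁻}} ℓ(f(x)ᵀ(μ_{c⁻} − μ_{c⁺})) | c⁺ ≠ c⁻ ], then L_sup^μ(f) ≤ (L_un(f) − τ)/(1 − τ). -/
import Mathlib

open MeasureTheory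
open scoped RealInnerProductSpace BigOperators

private lemma aux_jensen {X : Type*} [MeasurableSpace X] {d : ℕ}
    (ν₀ ν₁ ν₂ : Measure X) [IsProbabilityMeasure ν₀] [IsProbabilityMeasure ν₁]
    [IsProbabilityMeasure ν₂]
    (f : X → EuclideanSpace ℝ (Fin d)) (hfm : Measurable f)
    (R : ℝ) (hfb : ∀ x, ‖f x‖ ≤ R)
    (ℓ : ℝ → ℝ) (hℓ : ConvexOn ℝ Set.univ ℓ) (hℓc : Continuous ℓ) :
    ∫ x, ℓ ⟪f x, (∫ y, f y ∂ν₁) - (∫ y, f y ∂ν₂)⟫ ∂ν₀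
      ≤ ∫ x, ∫ xp, ∫ xm, ℓ ⟪f x, f xp - f xm⟫ ∂ν₂ ∂ν₁ ∂ν₀ := by
  classical
  have hX : Nonempty X := by
    by_contra h
    haveI : IsEmpty X := not_nonempty_iff.mp h
    have h1 : ν₀ Set.univ = 1 := measure_univ
    rw [Set.univ_eq_empty_iff.mpr this, measure_empty] at h1
    exact zero_ne_one h1
  have hR : 0 ≤ R := le_trans (norm_nonneg _) (hfb (Classical.arbitrary X))
  set K := R * (R + R) with hKdef
  have hK0 : 0 ≤ K := by positivity
  obtain ⟨y0, -, hy0⟩ := isCompact_Icc.exists_isMaxOn ⟨0, by constructor <;> linarith⟩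
      ((hℓc.abs).continuousOn : ContinuousOn (fun y => |ℓ y|) (Set.Icc (-K) K))
  set M := |ℓ y0| with hMdef
  have hM : ∀ y : ℝ, |y| ≤ K → |ℓ y| ≤ M := fun y hy => hy0 (Set.mem_Icc.mpr (abs_le.mp hy))
  set μp := ∫ y, f y ∂ν₁ with hμp
  set μm := ∫ y, f y ∂ν₂ with hμm
  have hμb : ∀ (ν : Measure X), IsProbabilityMeasure ν → ‖∫ y, f y ∂ν‖ ≤ R := by
    intro ν hν
    have := norm_integral_le_of_norm_le_const (μ := ν) (f := f) (C := R)
      (Filter.Eventually.of_forall hfb)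
    simpa using this
  have hip : ∀ (x : X) (v w : EuclideanSpace ℝ (Fin d)),
      ‖v‖ ≤ R → ‖w‖ ≤ R → |⟪f x, v - w⟫| ≤ K := by
    intro x v w hv hw
    calc |⟪f x, v - w⟫| ≤ ‖f x‖ * ‖v - w‖ := abs_real_inner_le_norm _ _
      _ ≤ R * (R + R) :=
        mul_le_mul (hfb x) ((norm_sub_le v w).trans (add_le_add hv hw)) (norm_nonneg _) hR
  have hℓb : ∀ (x : X) (v w : EuclideanSpace ℝ (Fin d)),
      ‖v‖ ≤ R → ‖w‖ ≤ R → |ℓ ⟪f x, v - w⟫| ≤ M :=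
    fun x v w hv hw => hM _ (hip x v w hv hw)
  have hfint : ∀ (ν : Measure X), IsProbabilityMeasure ν → Integrable f ν := by
    intro ν hν
    exact (integrable_const R).mono' hfm.aestronglyMeasurable
      (Filter.Eventually.of_forall fun x => by simpa using hfb x)
  have hsint : ∀ (ν : Measure X), IsProbabilityMeasure ν → ∀ (g : X → ℝ) (B : ℝ),
      AEStronglyMeasurable g ν → (∀ x, |g x| ≤ B) → Integrable g ν := by
    intro ν hν g B hg hB
    exact (integrable_const B).mono' hg
      (Filter.Eventually.of_forall fun x => by simpa [Real.norm_eq_abs] using hB x)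
  -- measurability of the basic integrands
  have hmeas2 : ∀ x : X, Measurable fun p : X × X => ℓ ⟪f x, f p.1 - f p.2⟫ := by
    intro x
    exact hℓc.measurable.comp
      (Measurable.inner measurable_const ((hfm.comp measurable_fst).sub (hfm.comp measurable_snd)))
  have hmeasInner : ∀ x : X, StronglyMeasurable fun xp : X =>
      ∫ xm, ℓ ⟪f x, f xp - f xm⟫ ∂ν₂ := by
    intro x
    exact ((hmeas2 x).stronglyMeasurable).integral_prod_right'
  have hboundInner : ∀ (x xp : X), |∫ xm, ℓ ⟪f x, f xp - f xm⟫ ∂ν₂| ≤ M := by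
    intro x xp
    have := norm_integral_le_of_norm_le_const (μ := ν₂)
      (f := fun xm => ℓ ⟪f x, f xp - f xm⟫) (C := M)
      (Filter.Eventually.of_forall fun xm => by
        simpa [Real.norm_eq_abs] using hℓb x (f xp) (f xm) (hfb xp) (hfb xm))
    simpa [Real.norm_eq_abs] using this
  have key : ∀ x : X, ℓ ⟪f x, μp - μm⟫ ≤ ∫ xp, ∫ xm, ℓ ⟪f x, f xp - f xm⟫ ∂ν₂ ∂ν₁ := by
    intro x
    have step1 : ∀ xp : X, ℓ ⟪f x, f xp - μm⟫ ≤ ∫ xm, ℓ ⟪f x, f xp - f xm⟫ ∂ν₂ := by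
      intro xp
      have hm1 : Measurable fun xm : X => ⟪f x, f xp - f xm⟫ :=
        Measurable.inner measurable_const (measurable_const.sub hfm)
      have hInt1 : Integrable (fun xm : X => ⟪f x, f xp - f xm⟫) ν₂ :=
        hsint ν₂ ‹_› _ K hm1.aestronglyMeasurable
          (fun xm => hip x (f xp) (f xm) (hfb xp) (hfb xm))
      have hInt2 : Integrable (ℓ ∘ fun xm : X => ⟪f x, f xp - f xm⟫) ν₂ :=
        hsint ν₂ ‹_› _ M (hℓc.measurable.comp hm1).aestronglyMeasurable
          (fun xm => hℓb x (f xp) (f xm) (hfb xp) (hfb xm))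
      have heq : ∫ xm, ⟪f x, f xp - f xm⟫ ∂ν₂ = ⟪f x, f xp - μm⟫ := by
        have h1 : ∀ xm : X, ⟪f x, f xp - f xm⟫ = ⟪f x, f xp⟫ - ⟪f x, f xm⟫ :=
          fun xm => inner_sub_right _ _ _
        have h2 : Integrable (fun xm : X => ⟪f x, f xm⟫) ν₂ :=
          hsint ν₂ ‹_› _ (R * R) (Measurable.inner measurable_const hfm).aestronglyMeasurable
            (fun xm => by
              calc |⟪f x, f xm⟫| ≤ ‖f x‖ * ‖f xm‖ := abs_real_inner_le_norm _ _
                _ ≤ R * R := mul_le_mul (hfb x) (hfb xm) (norm_nonneg _) hR)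
        calc ∫ xm, ⟪f x, f xp - f xm⟫ ∂ν₂
            = ∫ xm, (⟪f x, f xp⟫ - ⟪f x, f xm⟫) ∂ν₂ := by simp_rw [h1]
          _ = ⟪f x, f xp⟫ - ∫ xm, ⟪f x, f xm⟫ ∂ν₂ := by
              rw [integral_sub (integrable_const _) h2]; simp
          _ = ⟪f x, f xp⟫ - ⟪f x, μm⟫ := by rw [integral_inner (hfint ν₂ ‹_›)]
          _ = ⟪f x, f xp - μm⟫ := (inner_sub_right _ _ _).symm
      have := hℓ.map_integral_le hℓc.continuousOn isClosed_univ
        (Filter.Eventually.of_forall fun _ => Set.mem_univ _) hInt1 hInt2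
      rw [heq] at this
      exact this
    have hm2 : Measurable fun xp : X => ⟪f x, f xp - μm⟫ :=
      Measurable.inner measurable_const (hfm.sub measurable_const)
    have hμmb : ‖μm‖ ≤ R := hμb ν₂ ‹_›
    have hInt3 : Integrable (fun xp : X => ⟪f x, f xp - μm⟫) ν₁ :=
      hsint ν₁ ‹_› _ K hm2.aestronglyMeasurable (fun xp => hip x (f xp) μm (hfb xp) hμmb)
    have hInt4 : Integrable (ℓ ∘ fun xp : X => ⟪f x, f xp - μm⟫) ν₁ :=
      hsint ν₁ ‹_› _ M (hℓc.measurable.comp hm2).aestronglyMeasurable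
        (fun xp => hℓb x (f xp) μm (hfb xp) hμmb)
    have heq2 : ∫ xp, ⟪f x, f xp - μm⟫ ∂ν₁ = ⟪f x, μp - μm⟫ := by
      have h2 : Integrable (fun xp : X => ⟪f x, f xp⟫) ν₁ :=
        hsint ν₁ ‹_› _ (R * R) (Measurable.inner measurable_const hfm).aestronglyMeasurable
          (fun xp => by
            calc |⟪f x, f xp⟫| ≤ ‖f x‖ * ‖f xp‖ := abs_real_inner_le_norm _ _
              _ ≤ R * R := mul_le_mul (hfb x) (hfb xp) (norm_nonneg _) hR)
      calc ∫ xp, ⟪f x, f xp - μm⟫ ∂ν₁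
          = ∫ xp, (⟪f x, f xp⟫ - ⟪f x, μm⟫) ∂ν₁ := by
            simp_rw [inner_sub_right]
        _ = (∫ xp, ⟪f x, f xp⟫ ∂ν₁) - ⟪f x, μm⟫ := by
            rw [integral_sub h2 (integrable_const _)]; simp
        _ = ⟪f x, μp⟫ - ⟪f x, μm⟫ := by rw [integral_inner (hfint ν₁ ‹_›)]
        _ = ⟪f x, μp - μm⟫ := (inner_sub_right _ _ _).symm
    have jen2 := hℓ.map_integral_le hℓc.continuousOn isClosed_univ
      (Filter.Eventually.of_forall fun _ => Set.mem_univ _) hInt3 hInt4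
    rw [heq2] at jen2
    have mono2 : ∫ xp, ℓ ⟪f x, f xp - μm⟫ ∂ν₁
        ≤ ∫ xp, ∫ xm, ℓ ⟪f x, f xp - f xm⟫ ∂ν₂ ∂ν₁ := by
      refine integral_mono hInt4 ?_ step1
      exact hsint ν₁ ‹_› _ M (hmeasInner x).aestronglyMeasurable (hboundInner x)
    exact le_trans jen2 mono2
  -- now integrate the pointwise bound over ν₀
  have hmL : Measurable fun x : X => ℓ ⟪f x, μp - μm⟫ :=
    hℓc.measurable.comp (Measurable.inner hfm measurable_const)
  have hIntL : Integrable (fun x : X => ℓ ⟪f x, μp - μm⟫) ν₀ :=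
    hsint ν₀ ‹_› _ M hmL.aestronglyMeasurable
      (fun x => hℓb x μp μm (hμb ν₁ ‹_›) (hμb ν₂ ‹_›))
  have hmeasR : StronglyMeasurable fun x : X =>
      ∫ xp, ∫ xm, ℓ ⟪f x, f xp - f xm⟫ ∂ν₂ ∂ν₁ := by
    have h3 : Measurable fun r : (X × X) × X => ℓ ⟪f r.1.1, f r.1.2 - f r.2⟫ :=
      hℓc.measurable.comp
        (Measurable.inner (hfm.comp (measurable_fst.comp measurable_fst))
          ((hfm.comp (measurable_snd.comp measurable_fst)).sub (hfm.comp measurable_snd)))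
    have h4 : StronglyMeasurable fun q : X × X =>
        ∫ xm, ℓ ⟪f q.1, f q.2 - f xm⟫ ∂ν₂ :=
      h3.stronglyMeasurable.integral_prod_right'
    exact h4.integral_prod_right'
  have hIntR : Integrable (fun x : X =>
      ∫ xp, ∫ xm, ℓ ⟪f x, f xp - f xm⟫ ∂ν₂ ∂ν₁) ν₀ := by
    refine hsint ν₀ ‹_› _ M hmeasR.aestronglyMeasurable (fun x => ?_)
    have := norm_integral_le_of_norm_le_const (μ := ν₁)
      (f := fun xp => ∫ xm, ℓ ⟪f x, f xp - f xm⟫ ∂ν₂) (C := M)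
      (Filter.Eventually.of_forall fun xp => by
        simpa [Real.norm_eq_abs] using hboundInner x xp)
    simpa [Real.norm_eq_abs] using this
  exact integral_mono hIntL hIntR key

/-- Lemma 4.3: the mean-classifier average binary supervised loss is upper bounded by
`(L_un(f) - τ)/(1 - τ)` where `τ` is the class collision probability. -/
theorem mean_classifier_loss_le_unsup_loss
    {X : Type*} [MeasurableSpace X] {C : Type*} [Fintype C] [DecidableEq C] {d : ℕ}
    (ρ : C → ℝ) (hρ0 : ∀ c, 0 ≤ ρ c) (hρ1 : ∑ c, ρ c = 1)
    (hτ : ∑ c, (ρ c) ^ 2 < 1)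
    (D : C → Measure X) (hD : ∀ c, IsProbabilityMeasure (D c))
    (f : X → EuclideanSpace ℝ (Fin d)) (hfm : Measurable f)
    (R : ℝ) (hfb : ∀ x, ‖f x‖ ≤ R)
    (ℓ : ℝ → ℝ) (hℓ : ConvexOn ℝ Set.univ ℓ) (hℓc : Continuous ℓ) (hℓ0 : ℓ 0 = 1)
    (μ : C → EuclideanSpace ℝ (Fin d)) (hμ : ∀ c, μ c = ∫ x, f x ∂(D c)) :
    (1 / (1 - ∑ c, (ρ c) ^ 2)) *
        ∑ cp, ∑ cm, (if cp ≠ cm then ρ cp * ρ cm *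
          ((1 / 2) * ∫ x, ℓ ⟪f x, μ cp - μ cm⟫ ∂(D cp) +
           (1 / 2) * ∫ x, ℓ ⟪f x, μ cm - μ cp⟫ ∂(D cm)) else 0)
    ≤ ((∑ cp, ∑ cm, ρ cp * ρ cm *
          ∫ x, ∫ xp, ∫ xm, ℓ ⟪f x, f xp - f xm⟫ ∂(D cm) ∂(D cp) ∂(D cp)) -
        ∑ c, (ρ c) ^ 2) / (1 - ∑ c, (ρ c) ^ 2) := by
  classical
  haveI : ∀ c, IsProbabilityMeasure (D c) := hD
  set τ := ∑ c, (ρ c) ^ 2 with hτdef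
  have hτpos : 0 < 1 - τ := by linarith
  set A : C → C → ℝ := fun cp cm => ∫ x, ℓ ⟪f x, μ cp - μ cm⟫ ∂(D cp) with hA
  set I : C → C → ℝ := fun cp cm =>
    ∫ x, ∫ xp, ∫ xm, ℓ ⟪f x, f xp - f xm⟫ ∂(D cm) ∂(D cp) ∂(D cp) with hI
  have hAI : ∀ cp cm, A cp cm ≤ I cp cm := by
    intro cp cm
    have := aux_jensen (D cp) (D cp) (D cm) f hfm R hfb ℓ hℓ hℓc
    simpa [hA, hI, hμ cp, hμ cm] using this
  have hAdiag : ∀ cp, A cp cp = 1 := by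
    intro cp
    simp [hA, sub_self, hℓ0]
  -- symmetrization
  have hsymm : (∑ cp, ∑ cm, (if cp ≠ cm then ρ cp * ρ cm *
        ((1 / 2) * A cp cm + (1 / 2) * A cm cp) else 0))
      = ∑ cp, ∑ cm, (if cp ≠ cm then ρ cp * ρ cm * A cp cm else 0) := by
    have h1 : (∑ cp, ∑ cm, (if cp ≠ cm then ρ cp * ρ cm * A cm cp else 0))
        = ∑ cp, ∑ cm, (if cp ≠ cm then ρ cp * ρ cm * A cp cm else 0) := by
      rw [Finset.sum_comm]
      refine Finset.sum_congr rfl fun b _ => Finset.sum_congr rfl fun a _ => ?_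
      by_cases h : a = b <;> simp [h, Ne.symm, eq_comm, mul_comm]
    calc (∑ cp, ∑ cm, (if cp ≠ cm then ρ cp * ρ cm *
          ((1 / 2) * A cp cm + (1 / 2) * A cm cp) else 0))
        = ∑ cp, ∑ cm, ((1/2) * (if cp ≠ cm then ρ cp * ρ cm * A cp cm else 0)
            + (1/2) * (if cp ≠ cm then ρ cp * ρ cm * A cm cp else 0)) := by
          refine Finset.sum_congr rfl fun cp _ => Finset.sum_congr rfl fun cm _ => ?_
          by_cases h : cp = cm <;> simp [h] <;> ring
      _ = (1/2) * (∑ cp, ∑ cm, (if cp ≠ cm then ρ cp * ρ cm * A cp cm else 0))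
            + (1/2) * (∑ cp, ∑ cm, (if cp ≠ cm then ρ cp * ρ cm * A cm cp else 0)) := by
          simp [Finset.sum_add_distrib, Finset.mul_sum]
      _ = ∑ cp, ∑ cm, (if cp ≠ cm then ρ cp * ρ cm * A cp cm else 0) := by
          rw [h1]; ring
  -- τ as a double sum over the diagonal
  have hτeq : τ = ∑ cp, ∑ cm, (if cp = cm then ρ cp * ρ cm else 0) := by
    rw [hτdef]
    refine Finset.sum_congr rfl fun c _ => ?_
    simp [Finset.sum_ite_eq, sq]
  -- main inequality on sums
  have hmain : (∑ cp, ∑ cm, (if cp ≠ cm then ρ cp * ρ cm * A cp cm else 0)) + τ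
      ≤ ∑ cp, ∑ cm, ρ cp * ρ cm * I cp cm := by
    rw [hτeq, ← Finset.sum_add_distrib]
    simp_rw [← Finset.sum_add_distrib]
    refine Finset.sum_le_sum fun cp _ => Finset.sum_le_sum fun cm _ => ?_
    have hρρ : 0 ≤ ρ cp * ρ cm := mul_nonneg (hρ0 cp) (hρ0 cm)
    by_cases h : cp = cm
    · subst h
      have : (1 : ℝ) ≤ I cp cp := by rw [← hAdiag cp]; exact hAI cp cp
      simp only [if_neg (not_ne_iff.mpr rfl), if_pos rfl, zero_add]
      calc ρ cp * ρ cp = ρ cp * ρ cp * 1 := by ring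
        _ ≤ ρ cp * ρ cp * I cp cp := by
            exact mul_le_mul_of_nonneg_left this (mul_nonneg (hρ0 cp) (hρ0 cp))
    · simp only [if_pos h, if_neg h, add_zero]
      exact mul_le_mul_of_nonneg_left (hAI cp cm) hρρ
  -- conclude
  calc (1 / (1 - τ)) *
        (∑ cp, ∑ cm, (if cp ≠ cm then ρ cp * ρ cm *
          ((1 / 2) * A cp cm + (1 / 2) * A cm cp) else 0))
      = (1 / (1 - τ)) * ∑ cp, ∑ cm, (if cp ≠ cm then ρ cp * ρ cm * A cp cm else 0) := by
        rw [hsymm]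
    _ ≤ (1 / (1 - τ)) * ((∑ cp, ∑ cm, ρ cp * ρ cm * I cp cm) - τ) :=
        mul_le_mul_of_nonneg_left (by linarith) (by positivity)
    _ = ((∑ cp, ∑ cm, ρ cp * ρ cm * I cp cm) - τ) / (1 - τ) := one_div_mul_eq_div _ _
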